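/- Let G be a discrete group and let B₁, …, B_k be a finite collection of subsets of G. If the pair (G, B_i) has relative property (T) for each i = 1, …, k, then the pair (G, B₁B₂⋯B_k) also has relative property (T), where B₁B₂⋯B_k denotes the set of all elements of G representable as a product b₁b₂⋯b_k with b_i ∈ B_i. -/

import Mathlib

/-- The pair `(G, B)` has relative property (T): for every `ε > 0` there are a finite
subset `S ⊆ G` and `μ > 0` such that in every unitary representation of `G`, every
(nonzero) `(S,μ)`-invariant vector is `(B,ε)`-invariant. -/
def RelativePropertyT (G : Type*) [Group G] (B : Set G) : Prop :=
  ∀ ε : ℝ, 0 < ε → ∃ (S : Finset G) (μ : ℝ), 0 < μ ∧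
    ∀ (V : Type) [NormedAddCommGroup V] [InnerProductSpace ℂ V] [CompleteSpace V]
      (π : G →* (V ≃ₗᵢ[ℂ] V)) (v : V), v ≠ 0 →
        (∀ s ∈ S, ‖π s v - v‖ ≤ μ * ‖v‖) → ∀ b ∈ B, ‖π b v - v‖ ≤ ε * ‖v‖

/-- `Q` is a Kazhdan subset of `G`: there is `ε > 0` such that every unitary representation
of `G` with a (nonzero) `(Q,ε)`-invariant vector has a nonzero `G`-invariant vector. -/
def IsKazhdanSet (G : Type*) [Group G] (Q : Set G) : Prop :=
  ∃ ε : ℝ, 0 < ε ∧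
    ∀ (V : Type) [NormedAddCommGroup V] [InnerProductSpace ℂ V] [CompleteSpace V]
      (π : G →* (V ≃ₗᵢ[ℂ] V)),
      (∃ v : V, v ≠ 0 ∧ ∀ s ∈ Q, ‖π s v - v‖ ≤ ε * ‖v‖) →
      ∃ v : V, v ≠ 0 ∧ ∀ g : G, π g v = v

/-- `G` has Kazhdan's property (T). -/
def HasPropertyT (G : Type*) [Group G] : Prop :=
  ∃ S : Finset G, IsKazhdanSet G (↑S : Set G)

/-- If every element of a list moves `v` by at most `c`, then the product moves `v`
by at most `length * c`. -/
lemma norm_prod_smul_sub_le {G : Type*} [Group G] {V : Type}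
    [NormedAddCommGroup V] [InnerProductSpace ℂ V]
    (π : G →* (V ≃ₗᵢ[ℂ] V)) (v : V) (c : ℝ) :
    ∀ l : List G, (∀ g ∈ l, ‖π g v - v‖ ≤ c) →
      ‖π l.prod v - v‖ ≤ l.length * c := by
  intro l
  induction l with
  | nil => simp
  | cons g t ih =>
    intro hmem
    have key : π (g * t.prod) v - v = π g (π t.prod v - v) + (π g v - v) := by
      simp [map_mul, LinearIsometryEquiv.map_sub]
    calc ‖π (g :: t).prod v - v‖ = ‖π g (π t.prod v - v) + (π g v - v)‖ := by
          rw [List.prod_cons, key]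
      _ ≤ ‖π g (π t.prod v - v)‖ + ‖π g v - v‖ := norm_add_le _ _
      _ = ‖π t.prod v - v‖ + ‖π g v - v‖ := by rw [LinearIsometryEquiv.norm_map]
      _ ≤ t.length * c + c := by
          gcongr
          · exact ih fun x hx => hmem x (List.mem_cons_of_mem _ hx)
          · exact hmem g List.mem_cons_self
      _ = (g :: t).length * c := by push_cast [List.length_cons]; ring

/-- Bounded generation principle: if `(G, Bᵢ)` has relative property (T) for each
`i = 1, …, k`, then so does `(G, B₁B₂⋯B_k)`, where `B₁B₂⋯B_k` is the set of all elements
of `G` representable as a product `b₁b₂⋯b_k` with `bᵢ ∈ Bᵢ`. -/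
theorem relativePropertyT_of_product {G : Type*} [Group G] {k : ℕ} (B : Fin k → Set G)
    (h : ∀ i, RelativePropertyT G (B i)) :
    RelativePropertyT G
      {g : G | ∃ b : Fin k → G, (∀ i, b i ∈ B i) ∧ (List.ofFn b).prod = g} := by
  classical
  intro ε hε
  have hε' : 0 < ε / (k + 1) := by positivity
  choose S μ hμpos hS using fun i => h i (ε / (k + 1)) hε'
  -- minimum of all the μ i, together with 1
  set T : Finset ℝ := insert 1 (Finset.univ.image μ) with hT
  have hTne : T.Nonempty := ⟨1, Finset.mem_insert_self _ _⟩
  refine ⟨Finset.univ.biUnion S, T.min' hTne, ?_, ?_⟩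
  · rcases Finset.mem_insert.mp (T.min'_mem hTne) with h1 | h2
    · rw [h1]; norm_num
    · obtain ⟨i, -, hi⟩ := Finset.mem_image.mp h2
      rw [← hi]; exact hμpos i
  · intro V _ _ _ π v hv hinv g hg
    obtain ⟨b, hb, rfl⟩ := hg
    have hμle : ∀ i, T.min' hTne ≤ μ i := fun i =>
      Finset.min'_le _ _ (Finset.mem_insert_of_mem (Finset.mem_image_of_mem μ (Finset.mem_univ i)))
    have hbv : ∀ i, ‖π (b i) v - v‖ ≤ (ε / (k + 1)) * ‖v‖ := by
      intro i
      refine hS i V π v hv (fun s hs => ?_) (b i) (hb i)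
      have := hinv s (Finset.mem_biUnion.mpr ⟨i, Finset.mem_univ i, hs⟩)
      calc ‖π s v - v‖ ≤ T.min' hTne * ‖v‖ := this
        _ ≤ μ i * ‖v‖ := by gcongr; exact hμle i
    have := norm_prod_smul_sub_le π v ((ε / (k + 1)) * ‖v‖) (List.ofFn b)
      (by intro g hg; obtain ⟨i, rfl⟩ := List.mem_ofFn.mp hg; exact hbv i)
    calc ‖π (List.ofFn b).prod v - v‖ ≤ (List.ofFn b).length * ((ε / (k + 1)) * ‖v‖) := this
      _ = k * ((ε / (k + 1)) * ‖v‖) := by rw [List.length_ofFn]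
      _ ≤ ε * ‖v‖ := by
          rw [show (k : ℝ) * (ε / (k + 1) * ‖v‖) = (k / (k + 1)) * (ε * ‖v‖) by ring]
          have h1 : (k : ℝ) / (k + 1) ≤ 1 := by
            rw [div_le_one (by positivity)]; linarith
          nlinarith [norm_nonneg v, mul_nonneg hε.le (norm_nonneg v)]
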